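/- For every t > −1 and every s ∈ (0,1), ∫_s^1 ∫_{s₁}^1 ∫_{s₂}^1 s₁^{−1}(1−s₁)^{−1}·s₃^{−1}(1−s₃)^t ds₃ ds₂ ds₁ = −∫_s^1 (1−x)^t·x^{−1}·[x·ln(s/x) + (1−x)·ln((1−s)/(1−x))] dx, and both sides are finite. -/

import Mathlib

open MeasureTheory Set


lemma swap_tri (a : ℝ) (F : ℝ → ℝ → ENNReal) (hF : Measurable (Function.uncurry F)) :
    ∫⁻ x in Set.Ioo a 1, ∫⁻ y in Set.Ioo x 1, F x y
      = ∫⁻ y in Set.Ioo a 1, ∫⁻ x in Set.Ioo a y, F x y := by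
  set S : Set (ℝ × ℝ) := {p | a < p.1 ∧ p.1 < p.2 ∧ p.2 < 1} with hS
  have hSm : MeasurableSet S := by
    apply MeasurableSet.inter (measurableSet_lt measurable_const measurable_fst)
    exact MeasurableSet.inter (measurableSet_lt measurable_fst measurable_snd)
      (measurableSet_lt measurable_snd measurable_const)
  set G : ℝ × ℝ → ENNReal := S.indicator (Function.uncurry F) with hG
  have hGm : Measurable G := hF.indicator hSm
  have h1 : ∫⁻ x in Set.Ioo a 1, ∫⁻ y in Set.Ioo x 1, F x y = ∫⁻ x, ∫⁻ y, G (x, y) := by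
    rw [← lintegral_indicator measurableSet_Ioo]
    refine lintegral_congr fun x => ?_
    by_cases hx : x ∈ Set.Ioo a 1
    · rw [Set.indicator_of_mem hx, ← lintegral_indicator measurableSet_Ioo]
      refine lintegral_congr fun y => ?_
      by_cases hy : y ∈ Set.Ioo x 1
      · rw [Set.indicator_of_mem hy, hG, Set.indicator_of_mem]
        · rfl
        · exact ⟨hx.1, hy.1, hy.2⟩
      · rw [Set.indicator_of_notMem hy, hG, Set.indicator_of_notMem]
        intro h
        exact hy ⟨h.2.1, h.2.2⟩
    · rw [Set.indicator_of_notMem hx]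
      symm
      have hz : ∀ y, G (x, y) = 0 := fun y => by
        rw [hG, Set.indicator_of_notMem]
        intro h
        exact hx ⟨h.1, h.2.1.trans h.2.2⟩
      simp [hz]
  have h2 : ∫⁻ y in Set.Ioo a 1, ∫⁻ x in Set.Ioo a y, F x y = ∫⁻ y, ∫⁻ x, G (x, y) := by
    rw [← lintegral_indicator measurableSet_Ioo]
    refine lintegral_congr fun y => ?_
    by_cases hy : y ∈ Set.Ioo a 1
    · rw [Set.indicator_of_mem hy, ← lintegral_indicator measurableSet_Ioo]
      refine lintegral_congr fun x => ?_
      by_cases hx : x ∈ Set.Ioo a y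
      · rw [Set.indicator_of_mem hx, hG, Set.indicator_of_mem]
        · rfl
        · exact ⟨hx.1, hx.2, hy.2⟩
      · rw [Set.indicator_of_notMem hx, hG, Set.indicator_of_notMem]
        intro h
        exact hx ⟨h.1, h.2.1⟩
    · rw [Set.indicator_of_notMem hy]
      symm
      have hz : ∀ x, G (x, y) = 0 := fun x => by
        rw [hG, Set.indicator_of_notMem]
        intro h
        exact hy ⟨h.1.trans h.2.1, h.2.2⟩
      simp [hz]
  rw [h1, h2]
  exact lintegral_lintegral_swap (hGm.aemeasurable)

lemma inner_calc (t s x : ℝ) (hs0 : 0 < s) (hx1 : s < x) (hx2 : x < 1) :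
    ∫⁻ u in Set.Ioo s x, ENNReal.ofReal (u⁻¹ * (1 - u)⁻¹ * (x⁻¹ * (1 - x) ^ t) * (x - u))
      = ENNReal.ofReal ((1 - x) ^ t * x⁻¹ *
          (-(x * Real.log (s / x) + (1 - x) * Real.log ((1 - s) / (1 - x))))) := by
  have hx0 : 0 < x := hs0.trans hx1
  have hsx : s ≤ x := hx1.le
  set h : ℝ → ℝ := fun u => u⁻¹ * (1 - u)⁻¹ * (x - u) with hh
  have hpos : ∀ u ∈ Set.uIcc s x, 0 < u ∧ u < 1 := by
    intro u hu
    rw [Set.uIcc_of_le hsx] at hu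
    exact ⟨hs0.trans_le hu.1, lt_of_le_of_lt hu.2 hx2⟩
  have hcont : ContinuousOn h (Set.uIcc s x) := by
    apply ContinuousOn.mul
    apply ContinuousOn.mul
    · exact continuousOn_id.inv₀ fun u hu => (hpos u hu).1.ne'
    · exact (continuousOn_const.sub continuousOn_id).inv₀ fun u hu => by
        have := (hpos u hu).2; intro hz; change (1:ℝ) - u = 0 at hz; linarith
    · exact continuousOn_const.sub continuousOn_id
  have hderiv : ∀ u ∈ Set.uIcc s x,
      HasDerivAt (fun u => x * Real.log u - (x - 1) * Real.log (1 - u)) (h u) u := by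
    intro u hu
    obtain ⟨hu0, hu1⟩ := hpos u hu
    have h1u : (1 : ℝ) - u ≠ 0 := by linarith
    have d1 := (Real.hasDerivAt_log hu0.ne').const_mul x
    have d2 : HasDerivAt (fun u : ℝ => Real.log (1 - u)) (-(1 - u)⁻¹) u := by
      have := (Real.hasDerivAt_log h1u).comp u
        ((hasDerivAt_const u (1 : ℝ)).sub (hasDerivAt_id u))
      simpa [Function.comp_def] using this
    have := d1.sub (d2.const_mul (x - 1))
    refine this.congr_deriv ?_
    rw [hh]
    field_simp
    ring
  have hInt : IntervalIntegrable h volume s x := hcont.intervalIntegrable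
  have hFTC := intervalIntegral.integral_eq_sub_of_hasDerivAt hderiv hInt
  have hIntOn : IntegrableOn h (Set.Ioo s x) volume :=
    ((intervalIntegrable_iff_integrableOn_Ioc_of_le hsx).1 hInt).mono_set Set.Ioo_subset_Ioc_self
  have hnn : 0 ≤ᵐ[volume.restrict (Set.Ioo s x)] h := by
    refine (ae_restrict_iff' measurableSet_Ioo).2 (Filter.Eventually.of_forall fun u hu => ?_)
    have h1 : 0 < u := hs0.trans hu.1
    have h2 : u < 1 := hu.2.trans hx2
    have h3 : u < x := hu.2
    rw [hh]
    have : (0:ℝ) ≤ 1 - u := by linarith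
    have : (0:ℝ) ≤ x - u := by linarith
    have : (0:ℝ) ≤ u⁻¹ := by positivity
    have : (0:ℝ) ≤ (1 - u)⁻¹ := by positivity
    show (0:ℝ) ≤ u⁻¹ * (1 - u)⁻¹ * (x - u)
    positivity
  have hc : (0:ℝ) ≤ x⁻¹ * (1 - x) ^ t :=
    mul_nonneg (inv_nonneg.2 hx0.le) (Real.rpow_nonneg (by linarith) t)
  calc ∫⁻ u in Set.Ioo s x, ENNReal.ofReal (u⁻¹ * (1 - u)⁻¹ * (x⁻¹ * (1 - x) ^ t) * (x - u))
      = ∫⁻ u in Set.Ioo s x, ENNReal.ofReal (x⁻¹ * (1 - x) ^ t) * ENNReal.ofReal (h u) := by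
        refine setLIntegral_congr_fun measurableSet_Ioo (fun u hu => ?_)
        rw [← ENNReal.ofReal_mul hc]
        congr 1
        rw [hh]; ring
    _ = ENNReal.ofReal (x⁻¹ * (1 - x) ^ t) * ∫⁻ u in Set.Ioo s x, ENNReal.ofReal (h u) :=
        lintegral_const_mul' _ _ ENNReal.ofReal_ne_top
    _ = ENNReal.ofReal (x⁻¹ * (1 - x) ^ t) * ENNReal.ofReal (∫ u in Set.Ioo s x, h u) := by
        rw [ofReal_integral_eq_lintegral_ofReal hIntOn hnn]
    _ = ENNReal.ofReal ((1 - x) ^ t * x⁻¹ *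
          (-(x * Real.log (s / x) + (1 - x) * Real.log ((1 - s) / (1 - x))))) := by
        rw [← ENNReal.ofReal_mul hc]
        congr 1
        rw [← integral_Ioc_eq_integral_Ioo, ← intervalIntegral.integral_of_le hsx, hFTC,
          Real.log_div hs0.ne' hx0.ne', Real.log_div (by linarith : (1:ℝ)-s ≠ 0)
            (by linarith : (1:ℝ)-x ≠ 0)]
        ring

lemma meas1 (t c : ℝ) : Measurable (Function.uncurry fun (_ y : ℝ) =>
    ENNReal.ofReal (c * (y⁻¹ * (1 - y) ^ t))) := by
  apply Measurable.ennreal_ofReal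
  fun_prop

lemma meas2 (t : ℝ) : Measurable (Function.uncurry fun (u y : ℝ) =>
    ENNReal.ofReal (u⁻¹ * (1 - u)⁻¹ * (y⁻¹ * (1 - y) ^ t) * (y - u))) := by
  apply Measurable.ennreal_ofReal
  fun_prop

lemma collapse (t s₁ : ℝ) (h1 : 0 < s₁) (h2 : s₁ < 1) :
    ∫⁻ s₂ in Set.Ioo s₁ 1, ∫⁻ s₃ in Set.Ioo s₂ 1,
        ENNReal.ofReal (s₁⁻¹ * (1 - s₁)⁻¹ * (s₃⁻¹ * (1 - s₃) ^ t))
      = ∫⁻ s₃ in Set.Ioo s₁ 1,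
          ENNReal.ofReal (s₁⁻¹ * (1 - s₁)⁻¹ * (s₃⁻¹ * (1 - s₃) ^ t) * (s₃ - s₁)) := by
  rw [swap_tri s₁ _ (meas1 t (s₁⁻¹ * (1 - s₁)⁻¹))]
  refine setLIntegral_congr_fun measurableSet_Ioo (fun y hy => ?_)
  rw [setLIntegral_const, Real.volume_Ioo, ← ENNReal.ofReal_mul]
  have hy0 : 0 < y := h1.trans hy.1
  exact mul_nonneg (mul_nonneg (inv_nonneg.2 h1.le) (inv_nonneg.2 (by linarith)))
    (mul_nonneg (inv_nonneg.2 hy0.le) (Real.rpow_nonneg (by linarith [hy.2]) t))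

theorem stmt5 (t : ℝ) (ht : -1 < t) (s : ℝ) (hs : s ∈ Set.Ioo (0 : ℝ) 1) :
    (∫⁻ s₁ in Set.Ioo s 1, ∫⁻ s₂ in Set.Ioo s₁ 1, ∫⁻ s₃ in Set.Ioo s₂ 1,
        ENNReal.ofReal (s₁⁻¹ * (1 - s₁)⁻¹ * (s₃⁻¹ * (1 - s₃) ^ t)))
      = (∫⁻ x in Set.Ioo s 1, ENNReal.ofReal ((1 - x) ^ t * x⁻¹ *
          (-(x * Real.log (s / x) + (1 - x) * Real.log ((1 - s) / (1 - x)))))) ∧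
    (∫⁻ s₁ in Set.Ioo s 1, ∫⁻ s₂ in Set.Ioo s₁ 1, ∫⁻ s₃ in Set.Ioo s₂ 1,
        ENNReal.ofReal (s₁⁻¹ * (1 - s₁)⁻¹ * (s₃⁻¹ * (1 - s₃) ^ t))) ≠ ⊤ := by
  obtain ⟨hs0, hs1⟩ := hs
  have heq : (∫⁻ s₁ in Set.Ioo s 1, ∫⁻ s₂ in Set.Ioo s₁ 1, ∫⁻ s₃ in Set.Ioo s₂ 1,
        ENNReal.ofReal (s₁⁻¹ * (1 - s₁)⁻¹ * (s₃⁻¹ * (1 - s₃) ^ t)))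
      = ∫⁻ x in Set.Ioo s 1, ENNReal.ofReal ((1 - x) ^ t * x⁻¹ *
          (-(x * Real.log (s / x) + (1 - x) * Real.log ((1 - s) / (1 - x))))) := by
    calc (∫⁻ s₁ in Set.Ioo s 1, ∫⁻ s₂ in Set.Ioo s₁ 1, ∫⁻ s₃ in Set.Ioo s₂ 1,
        ENNReal.ofReal (s₁⁻¹ * (1 - s₁)⁻¹ * (s₃⁻¹ * (1 - s₃) ^ t)))
        = ∫⁻ s₁ in Set.Ioo s 1, ∫⁻ s₃ in Set.Ioo s₁ 1,
            ENNReal.ofReal (s₁⁻¹ * (1 - s₁)⁻¹ * (s₃⁻¹ * (1 - s₃) ^ t) * (s₃ - s₁)) := by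
          refine setLIntegral_congr_fun measurableSet_Ioo
            (fun s₁ hx => ?_)
          exact collapse t s₁ (hs0.trans hx.1) hx.2
      _ = ∫⁻ x in Set.Ioo s 1, ∫⁻ u in Set.Ioo s x,
            ENNReal.ofReal (u⁻¹ * (1 - u)⁻¹ * (x⁻¹ * (1 - x) ^ t) * (x - u)) :=
          swap_tri s _ (meas2 t)
      _ = ∫⁻ x in Set.Ioo s 1, ENNReal.ofReal ((1 - x) ^ t * x⁻¹ *
            (-(x * Real.log (s / x) + (1 - x) * Real.log ((1 - s) / (1 - x))))) := by
          refine setLIntegral_congr_fun measurableSet_Ioo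
            (fun x hx => ?_)
          exact inner_calc t s x hs0 hx.1 hx.2
  refine ⟨heq, ?_⟩
  rw [heq]
  set C : ℝ := -Real.log s - Real.log (1 - s) with hC
  have hls : Real.log s < 0 := Real.log_neg hs0 hs1
  have hls1 : Real.log (1 - s) < 0 := Real.log_neg (by linarith) (by linarith)
  have hCpos : 0 < C := by rw [hC]; linarith
  have hbound : ∀ x ∈ Set.Ioo s 1, (1 - x) ^ t * x⁻¹ *
      (-(x * Real.log (s / x) + (1 - x) * Real.log ((1 - s) / (1 - x))))
        ≤ s⁻¹ * C * (1 - x) ^ t := by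
    intro x hx
    have hx0 : 0 < x := hs0.trans hx.1
    have hx1 : x < 1 := hx.2
    have hlx : Real.log x ≤ 0 := Real.log_nonpos hx0.le hx1.le
    have hlx1 : Real.log (1 - x) ≤ 0 := Real.log_nonpos (by linarith) (by linarith)
    have hL : -(x * Real.log (s / x) + (1 - x) * Real.log ((1 - s) / (1 - x))) ≤ C := by
      rw [Real.log_div hs0.ne' hx0.ne',
        Real.log_div (by linarith : (1:ℝ) - s ≠ 0) (by linarith : (1:ℝ) - x ≠ 0), hC]
      nlinarith [mul_nonneg (sub_nonneg.2 hx1.le) (neg_nonneg.2 hls.le),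
        mul_nonpos_of_nonneg_of_nonpos hx0.le hlx,
        mul_nonpos_of_nonneg_of_nonpos (by linarith : (0:ℝ) ≤ 1 - x) hlx1,
        mul_nonneg hx0.le (neg_nonneg.2 hls1.le)]
    have hxi : x⁻¹ ≤ s⁻¹ := by
      apply inv_anti₀ hs0 hx.1.le
    have hrp : (0:ℝ) ≤ (1 - x) ^ t := Real.rpow_nonneg (by linarith) t
    have h1 : x⁻¹ * (-(x * Real.log (s / x) + (1 - x) * Real.log ((1 - s) / (1 - x))))
        ≤ s⁻¹ * C := by
      calc x⁻¹ * (-(x * Real.log (s / x) + (1 - x) * Real.log ((1 - s) / (1 - x))))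
          ≤ x⁻¹ * C := by
            apply mul_le_mul_of_nonneg_left hL (inv_nonneg.2 hx0.le)
        _ ≤ s⁻¹ * C := mul_le_mul_of_nonneg_right hxi hCpos.le
    calc (1 - x) ^ t * x⁻¹ *
        (-(x * Real.log (s / x) + (1 - x) * Real.log ((1 - s) / (1 - x))))
        = (x⁻¹ * (-(x * Real.log (s / x) + (1 - x) * Real.log ((1 - s) / (1 - x))))) *
          (1 - x) ^ t := by ring
      _ ≤ (s⁻¹ * C) * (1 - x) ^ t := mul_le_mul_of_nonneg_right h1 hrp
      _ = s⁻¹ * C * (1 - x) ^ t := by ring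
  have hIntOn : IntegrableOn (fun x : ℝ => s⁻¹ * C * (1 - x) ^ t) (Set.Ioo s 1) volume := by
    have h0 : IntervalIntegrable (fun x : ℝ => x ^ t) volume (1 - s) (1 - 1) :=
      intervalIntegral.intervalIntegrable_rpow' ht
    have h1 := h0.comp_sub_left 1
    simp only [sub_sub_cancel, sub_self, sub_zero] at h1
    have h2 : IntegrableOn (fun x : ℝ => (1 - x) ^ t) (Set.Ioo s 1) volume :=
      ((intervalIntegrable_iff_integrableOn_Ioc_of_le hs1.le).1 h1).mono_set
        Set.Ioo_subset_Ioc_self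
    exact h2.const_mul _
  have hfin : (∫⁻ x in Set.Ioo s 1, ENNReal.ofReal (s⁻¹ * C * (1 - x) ^ t)) < ⊤ :=
    hIntOn.lintegral_lt_top
  refine ne_top_of_le_ne_top hfin.ne ?_
  refine setLIntegral_mono ?_ fun x hx => ENNReal.ofReal_le_ofReal (hbound x hx)
  apply Measurable.ennreal_ofReal
  fun_prop
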